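/- Let M be a loopless matroid on a nonempty finite ground set E with rank function r, and let γ = γ(M) be its density, the maximum over nonempty X ⊆ E of |X| / r(X). Then there exist finitely many independent sets I_1, …, I_m of M and nonnegative reals λ_1, …, λ_m with Σ_{t=1}^m λ_t = 1 such that for every element e ∈ E, Σ_{t : e ∈ I_t} λ_t = 1/γ. (That is, the vector with all coordinates equal to 1/γ(M) is a convex combination of indicator vectors of independent sets of M.) -/

import Mathlib

/-- A matroid on a finite ground set `E`, given by its rank function `r`,
where `r X` is the size of a largest independent subset of `X`. -/
structure FinMatroid (α : Type*) [DecidableEq α] where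
  E : Finset α
  r : Finset α → ℕ
  r_empty : r ∅ = 0
  r_le_card : ∀ X : Finset α, r X ≤ X.card
  r_mono : ∀ ⦃X Y : Finset α⦄, X ⊆ Y → r X ≤ r Y
  r_submod : ∀ X Y : Finset α, r (X ∪ Y) + r (X ∩ Y) ≤ r X + r Y

/-- A matroid is loopless if every singleton of the ground set is independent. -/
def FinMatroid.Loopless {α : Type*} [DecidableEq α] (M : FinMatroid α) : Prop :=
  ∀ e ∈ M.E, M.r {e} = 1
open Finset

section Aux

variable {α : Type*} [DecidableEq α]

def IsRankFn (r : Finset α → ℕ) : Prop :=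
  r ∅ = 0 ∧ (∀ X : Finset α, r X ≤ X.card) ∧
  (∀ ⦃X Y : Finset α⦄, X ⊆ Y → r X ≤ r Y) ∧
  ∀ X Y : Finset α, r (X ∪ Y) + r (X ∩ Y) ≤ r X + r Y

lemma contract_isRankFn {r : Finset α → ℕ} (hr : IsRankFn r) (e : α) :
    IsRankFn (fun X => r (X ∪ {e}) - r {e}) := by
  obtain ⟨h0, hle, hmono, hsub⟩ := hr
  refine ⟨?_, ?_, ?_, ?_⟩
  · simp
  · intro X
    show r (X ∪ {e}) - r {e} ≤ X.card
    have h1 := hsub X {e}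
    have h2 := hle X
    omega
  · intro X Y h
    exact Nat.sub_le_sub_right (hmono (union_subset_union_left h)) _
  · intro X Y
    have h1 := hsub (X ∪ {e}) (Y ∪ {e})
    have e1 : (X ∪ {e}) ∪ (Y ∪ {e}) = (X ∪ Y) ∪ {e} := by
      ext x; simp
    have e2 : (X ∪ {e}) ∩ (Y ∪ {e}) = (X ∩ Y) ∪ {e} := by
      ext x; simp; tauto
    rw [e1, e2] at h1
    have hX : r {e} ≤ r (X ∪ {e}) := hmono subset_union_right
    have hY : r {e} ≤ r (Y ∪ {e}) := hmono subset_union_right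
    have hZ : r {e} ≤ r ((X ∩ Y) ∪ {e}) := hmono subset_union_right
    have hU : r {e} ≤ r ((X ∪ Y) ∪ {e}) := hmono subset_union_right
    show r ((X ∪ Y) ∪ {e}) - r {e} + (r ((X ∩ Y) ∪ {e}) - r {e}) ≤
      (r (X ∪ {e}) - r {e}) + (r (Y ∪ {e}) - r {e})
    omega

lemma matroid_intersection (N : ℕ) :
    ∀ (E : Finset α) (r₁ r₂ : Finset α → ℕ), E.card ≤ N → IsRankFn r₁ → IsRankFn r₂ →
    ∀ n : ℕ, (∀ A ⊆ E, n ≤ r₁ A + r₂ (E \ A)) →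
    ∃ S ⊆ E, r₁ S = S.card ∧ r₂ S = S.card ∧ n ≤ S.card := by
  induction N with
  | zero =>
    intro E r₁ r₂ hcard h₁ h₂ n hmin
    have hE : E = ∅ := card_eq_zero.mp (Nat.le_zero.mp hcard)
    refine ⟨∅, by simp, h₁.1, h₂.1, ?_⟩
    have := hmin ∅ (by simp)
    simpa [hE, h₁.1, h₂.1] using this
  | succ N ih =>
    intro E r₁ r₂ hcard h₁ h₂ n hmin
    rcases E.eq_empty_or_nonempty with hE | ⟨e, he⟩
    · refine ⟨∅, by simp, h₁.1, h₂.1, ?_⟩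
      have := hmin ∅ (by simp)
      simpa [hE, h₁.1, h₂.1] using this
    · set E' := E \ {e} with hE'
      have hE'card : E'.card ≤ N := by
        have : E'.card = E.card - 1 := by
          rw [hE', card_sdiff_of_subset (by simpa using he)]; simp
        omega
      have hE'sub : E' ⊆ E := sdiff_subset
      by_cases hdel : ∀ A ⊆ E', n ≤ r₁ A + r₂ (E' \ A)
      · obtain ⟨S, hS, hr1, hr2, hn⟩ := ih E' r₁ r₂ hE'card h₁ h₂ n hdel
        exact ⟨S, hS.trans hE'sub, hr1, hr2, hn⟩
      · push_neg at hdel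
        obtain ⟨A₁, hA₁sub, hA₁⟩ := hdel
        have heA₁ : e ∉ A₁ := fun h => (mem_sdiff.mp (hA₁sub h)).2 (by simp)
        have he1 : r₁ {e} = 1 := by
          by_contra h
          have h0 : r₁ {e} = 0 := by have := h₁.2.1 {e}; simp at this; omega
          have key := hmin (A₁ ∪ {e}) (union_subset (hA₁sub.trans hE'sub) (by simpa using he))
          have hsub1 : r₁ (A₁ ∪ {e}) ≤ r₁ A₁ := by
            have := h₁.2.2.2 A₁ {e}; omega
          have hset : E \ (A₁ ∪ {e}) = E' \ A₁ := by
            ext x; simp [hE']; tauto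
          rw [hset] at key; omega
        have he2 : r₂ {e} = 1 := by
          by_contra h
          have h0 : r₂ {e} = 0 := by have := h₂.2.1 {e}; simp at this; omega
          have key := hmin A₁ (hA₁sub.trans hE'sub)
          have hset : E \ A₁ = (E' \ A₁) ∪ {e} := by
            ext x
            by_cases hxe : x = e <;> simp [hE', hxe, he, heA₁] <;> tauto
          rw [hset] at key
          have hsub2 : r₂ ((E' \ A₁) ∪ {e}) ≤ r₂ (E' \ A₁) := by
            have := h₂.2.2.2 (E' \ A₁) {e}; omega
          omega
        have key : ∀ B ⊆ E', n + 1 ≤ r₁ (B ∪ {e}) + r₂ (E \ B) := by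
          by_contra hcontra
          push_neg at hcontra
          obtain ⟨A₂, hA₂sub, hA₂⟩ := hcontra
          have heA₂ : e ∉ A₂ := fun h => (mem_sdiff.mp (hA₂sub h)).2 (by simp)
          have sub1 := h₁.2.2.2 A₁ (A₂ ∪ {e})
          have eu1 : A₁ ∪ (A₂ ∪ {e}) = (A₁ ∪ A₂) ∪ {e} := (union_assoc A₁ A₂ {e}).symm
          have ei1 : A₁ ∩ (A₂ ∪ {e}) = A₁ ∩ A₂ := by
            ext x
            by_cases hxe : x = e <;> simp [hxe, heA₁] <;> tauto
          rw [eu1, ei1] at sub1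
          have sub2 := h₂.2.2.2 (E' \ A₁) (E \ A₂)
          have eu2 : (E' \ A₁) ∪ (E \ A₂) = E \ (A₁ ∩ A₂) := by
            ext x
            by_cases hxe : x = e <;> simp [hE', hxe, he, heA₁, heA₂] <;> tauto
          have ei2 : (E' \ A₁) ∩ (E \ A₂) = E \ ((A₁ ∪ A₂) ∪ {e}) := by
            ext x
            by_cases hxe : x = e <;> simp [hE', hxe, he] <;> tauto
          rw [eu2, ei2] at sub2
          have hm1 := hmin (A₁ ∩ A₂) ((inter_subset_left).trans (hA₁sub.trans hE'sub))
          have hm2 := hmin ((A₁ ∪ A₂) ∪ {e})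
            (union_subset (union_subset (hA₁sub.trans hE'sub) (hA₂sub.trans hE'sub))
              (by simpa using he))
          omega
        -- contraction
        set r₁' : Finset α → ℕ := fun X => r₁ (X ∪ {e}) - r₁ {e} with hr₁'
        set r₂' : Finset α → ℕ := fun X => r₂ (X ∪ {e}) - r₂ {e} with hr₂'
        have hcon : ∀ B ⊆ E', n - 1 ≤ r₁' B + r₂' (E' \ B) := by
          intro B hB
          have heB : e ∉ B := fun h => (mem_sdiff.mp (hB h)).2 (by simp)
          have hset : (E' \ B) ∪ {e} = E \ B := by
            ext x
            by_cases hxe : x = e <;> simp [hE', hxe, he, heB] <;> tauto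
          have hk := key B hB
          have hg1 : r₁ {e} ≤ r₁ (B ∪ {e}) := h₁.2.2.1 subset_union_right
          have hg2 : r₂ {e} ≤ r₂ ((E' \ B) ∪ {e}) := h₂.2.2.1 subset_union_right
          simp only [hr₁', hr₂', hset]
          rw [hset] at hg2
          omega
        obtain ⟨S', hS'sub, hS1, hS2, hSn⟩ := ih E' r₁' r₂' hE'card
          (contract_isRankFn h₁ e) (contract_isRankFn h₂ e) (n - 1) hcon
        have heS' : e ∉ S' := fun h => (mem_sdiff.mp (hS'sub h)).2 (by simp)
        refine ⟨insert e S', insert_subset he (hS'sub.trans hE'sub), ?_, ?_, ?_⟩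
        · have h1 : insert e S' = S' ∪ {e} := by ext x; simp
          have hg : r₁ {e} ≤ r₁ (S' ∪ {e}) := h₁.2.2.1 subset_union_right
          simp only [hr₁'] at hS1
          rw [h1, card_union_of_disjoint (by simpa using heS')]
          simp only [card_singleton]
          omega
        · have h1 : insert e S' = S' ∪ {e} := by ext x; simp
          have hg : r₂ {e} ≤ r₂ (S' ∪ {e}) := h₂.2.2.1 subset_union_right
          simp only [hr₂'] at hS2
          rw [h1, card_union_of_disjoint (by simpa using heS')]
          simp only [card_singleton]
          omega
        · rw [card_insert_of_notMem heS']
          -- n could be 0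
          rcases Nat.eq_zero_or_pos n with h | h
          · omega
          · omega

open Finset



-- psl of a finset of pairs
def psl (A : Finset (α × ℕ)) (j : ℕ) : Finset α :=
  (A.filter (fun p => p.2 = j)).image Prod.fst

lemma mem_psl {A : Finset (α × ℕ)} {j : ℕ} {x : α} :
    x ∈ psl A j ↔ (x, j) ∈ A := by
  simp only [psl, mem_image, mem_filter]
  constructor
  · rintro ⟨⟨a, b⟩, ⟨hA, hb⟩, rfl⟩
    exact hb ▸ hA
  · intro h; exact ⟨(x, j), ⟨h, rfl⟩, rfl⟩

lemma card_psl (A : Finset (α × ℕ)) (j : ℕ) :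
    (psl A j).card = (A.filter (fun p => p.2 = j)).card := by
  apply card_image_of_injOn
  intro p hp q hq hpq
  simp only [coe_filter, Set.mem_setOf_eq] at hp hq
  exact Prod.ext hpq (hp.2.trans hq.2.symm)

lemma psl_union (A B : Finset (α × ℕ)) (j : ℕ) :
    psl (A ∪ B) j = psl A j ∪ psl B j := by
  ext x; simp [mem_psl]

lemma psl_inter (A B : Finset (α × ℕ)) (j : ℕ) :
    psl (A ∩ B) j = psl A j ∩ psl B j := by
  ext x; simp [mem_psl]

lemma psl_mono {A B : Finset (α × ℕ)} (h : A ⊆ B) (j : ℕ) : psl A j ⊆ psl B j := by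
  intro x hx; rw [mem_psl] at *; exact h hx

lemma sum_card_filter_le (A : Finset (α × ℕ)) (k : ℕ) :
    ∑ j ∈ range k, (A.filter (fun p => p.2 = j)).card ≤ A.card := by
  rw [← card_biUnion]
  · exact card_le_card (fun x hx => by
      simp only [mem_biUnion, mem_filter] at hx; exact hx.choose_spec.2.1)
  · intro i hi j hj hij
    simp only [disjoint_left, mem_filter]
    rintro p ⟨_, h1⟩ ⟨_, h2⟩
    exact hij (h1 ▸ h2 ▸ rfl)

lemma r1_isRankFn {r : Finset α → ℕ} (hr : IsRankFn r) (k : ℕ) :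
    IsRankFn (fun A : Finset (α × ℕ) => ∑ j ∈ range k, r (psl A j)) := by
  obtain ⟨h0, hle, hmono, hsub⟩ := hr
  refine ⟨?_, ?_, ?_, ?_⟩
  · simp [psl, h0]
  · intro A
    calc ∑ j ∈ range k, r (psl A j) ≤ ∑ j ∈ range k, (psl A j).card :=
          sum_le_sum (fun j _ => hle _)
      _ = ∑ j ∈ range k, (A.filter (fun p => p.2 = j)).card := by
          simp [card_psl]
      _ ≤ A.card := sum_card_filter_le A k
  · intro A B h
    exact sum_le_sum (fun j _ => hmono (psl_mono h j))
  · intro A B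
    rw [← sum_add_distrib, ← sum_add_distrib]
    refine sum_le_sum (fun j _ => ?_)
    rw [psl_union, psl_inter]
    exact hsub _ _

lemma r2_isRankFn : IsRankFn (fun A : Finset (α × ℕ) => (A.image Prod.fst).card) := by
  refine ⟨by simp, fun A => card_image_le, fun A B h => card_le_card (image_subset_image h), ?_⟩
  intro A B
  have h1 : (A ∪ B).image Prod.fst = A.image Prod.fst ∪ B.image Prod.fst := by
    rw [image_union]
  have h2 : (A ∩ B).image Prod.fst ⊆ A.image Prod.fst ∩ B.image Prod.fst :=
    image_inter_subset _ _ _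
  calc ((A ∪ B).image Prod.fst).card + ((A ∩ B).image Prod.fst).card
      ≤ (A.image Prod.fst ∪ B.image Prod.fst).card
        + (A.image Prod.fst ∩ B.image Prod.fst).card := by
        rw [h1]; exact Nat.add_le_add_left (card_le_card h2) _
    _ = (A.image Prod.fst).card + (B.image Prod.fst).card := card_union_add_card_inter _ _

lemma matroid_covering {r : Finset α → ℕ} (hr : IsRankFn r) (E : Finset α) (k : ℕ)
    (hd : ∀ X ⊆ E, X.card ≤ k * r X) :
    ∃ I : Fin k → Finset α,
      (∀ j, I j ⊆ E ∧ r (I j) = (I j).card) ∧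
      (∀ i j, i ≠ j → Disjoint (I i) (I j)) ∧
      Finset.univ.biUnion I = E := by
  obtain ⟨h0, hle, hmono, hsub⟩ := hr
  set EE : Finset (α × ℕ) := E ×ˢ range k with hEE
  set r₁ : Finset (α × ℕ) → ℕ := fun A => ∑ j ∈ range k, r (psl A j) with hr₁
  set r₂ : Finset (α × ℕ) → ℕ := fun A => (A.image Prod.fst).card with hr₂
  have hmin : ∀ A ⊆ EE, E.card ≤ r₁ A + r₂ (EE \ A) := by
    intro A hA
    set Y : Finset α := E.filter (fun x => ∀ j ∈ range k, (x, j) ∈ A) with hY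
    have hYE : Y ⊆ E := filter_subset _ _
    have h1 : k * r Y ≤ r₁ A := by
      calc k * r Y = ∑ _j ∈ range k, r Y := by simp [mul_comm]
        _ ≤ ∑ j ∈ range k, r (psl A j) := by
            refine sum_le_sum (fun j hj => hmono ?_)
            intro x hx
            rw [mem_psl]
            exact (mem_filter.mp hx).2 j hj
        _ = r₁ A := rfl
    have h2 : E.card - Y.card ≤ r₂ (EE \ A) := by
      have hsub2 : E \ Y ⊆ (EE \ A).image Prod.fst := by
        intro x hx
        obtain ⟨hxE, hxY⟩ := mem_sdiff.mp hx
        simp only [hY, mem_filter, not_and, not_forall] at hxY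
        obtain ⟨j, hj, hjA⟩ := hxY hxE
        refine mem_image.mpr ⟨(x, j), mem_sdiff.mpr ⟨?_, hjA⟩, rfl⟩
        simp [hEE, hxE, mem_range.mp hj]
      calc E.card - Y.card ≤ (E \ Y).card := by rw [card_sdiff_of_subset hYE]
        _ ≤ _ := card_le_card hsub2
    have h3 := hd Y hYE
    have h4 : Y.card ≤ E.card := card_le_card hYE
    omega
  obtain ⟨S, hSsub, hS1, hS2, hSn⟩ := matroid_intersection EE.card EE r₁ r₂ le_rfl
    (r1_isRankFn ⟨h0, hle, hmono, hsub⟩ k) r2_isRankFn E.card hmin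
  -- fiberwise decomposition of S.card
  have hfib : S.card = ∑ j ∈ range k, (S.filter (fun p => p.2 = j)).card :=
    card_eq_sum_card_fiberwise (fun x hx => (mem_product.mp (hSsub hx)).2)
  have hterm : ∀ j ∈ range k, r (psl S j) = (psl S j).card := by
    rw [hr₁] at hS1
    have hcards : ∑ j ∈ range k, (psl S j).card = S.card := by
      rw [hfib]; simp [card_psl]
    rw [← hcards] at hS1
    exact (sum_eq_sum_iff_of_le (fun j _ => hle _)).mp hS1
  have hinj : Set.InjOn Prod.fst (↑S : Set (α × ℕ)) := by
    apply Finset.card_image_iff.mp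
    simpa [hr₂] using hS2
  refine ⟨fun j => psl S j.val, fun j => ⟨?_, ?_⟩, ?_, ?_⟩
  · intro x hx
    rw [mem_psl] at hx
    exact (mem_product.mp (hSsub hx)).1
  · exact hterm j.val (mem_range.mpr j.isLt)
  · intro i j hij
    rw [disjoint_left]
    intro x hxi hxj
    rw [mem_psl] at hxi hxj
    have := hinj hxi hxj rfl
    exact hij (Fin.ext (by simpa using this))
  · have himg : S.image Prod.fst = E := by
      apply eq_of_subset_of_card_le
      · intro x hx
        obtain ⟨p, hp, rfl⟩ := mem_image.mp hx
        exact (mem_product.mp (hSsub hp)).1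
      · simp only [hr₂] at hS2; omega
    rw [← himg]
    ext x
    simp only [mem_biUnion, mem_univ, true_and, mem_image, mem_psl]
    constructor
    · rintro ⟨j, hj⟩; exact ⟨(x, j.val), hj, rfl⟩
    · rintro ⟨p, hp, rfl⟩
      have hk : p.2 < k := mem_range.mp (mem_product.mp (hSsub hp)).2
      exact ⟨⟨p.2, hk⟩, by simpa using hp⟩

end Aux

/-- For a loopless matroid with density `γ = max_{∅ ≠ X ⊆ E} |X|/r(X)`, the vector
with all coordinates `1/γ` is a convex combination of indicator vectors of
independent sets: there are independent sets `I_1, …, I_m` and nonnegative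
coefficients summing to `1` such that every `e ∈ E` has total coefficient `1/γ`. -/
theorem stmt12 {α : Type*} [DecidableEq α] (M : FinMatroid α)
    (hloop : M.Loopless) (hE : M.E.Nonempty) (γ : ℝ)
    (hγ : IsGreatest
      {d : ℝ | ∃ X : Finset α, X ⊆ M.E ∧ X.Nonempty ∧
        d = (X.card : ℝ) / (M.r X : ℝ)} γ) :
    ∃ (m : ℕ) (I : Fin m → Finset α) (lam : Fin m → ℝ),
      (∀ t, I t ⊆ M.E ∧ M.r (I t) = (I t).card) ∧
      (∀ t, 0 ≤ lam t) ∧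
      (∑ t, lam t = 1) ∧
      ∀ e ∈ M.E, ∑ t ∈ Finset.univ.filter (fun t => e ∈ I t), lam t = 1 / γ := by
  classical
  obtain ⟨Xs, hXsE, hXsne, hγeq⟩ := hγ.1
  set p : ℕ := Xs.card with hp
  set q : ℕ := M.r Xs with hq
  have hq1 : 1 ≤ q := by
    obtain ⟨x, hx⟩ := hXsne
    have h1 : M.r {x} ≤ M.r Xs := M.r_mono (by simpa using hx)
    rw [hloop x (hXsE hx)] at h1
    exact h1
  have hp1 : 1 ≤ p := card_pos.mpr hXsne
  have hqp : q ≤ p := M.r_le_card Xs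
  -- pull back rank along fst
  set r' : Finset (α × ℕ) → ℕ := fun X => M.r (X.image Prod.fst) with hr'
  have hr'rank : IsRankFn r' := by
    refine ⟨?_, ?_, ?_, ?_⟩
    · simp [hr', M.r_empty]
    · intro X
      calc M.r (X.image Prod.fst) ≤ (X.image Prod.fst).card := M.r_le_card _
        _ ≤ X.card := card_image_le
    · intro X Y h
      exact M.r_mono (image_subset_image h)
    · intro X Y
      have h1 : (X ∪ Y).image Prod.fst = X.image Prod.fst ∪ Y.image Prod.fst := by
        rw [image_union]
      have h2 : M.r ((X ∩ Y).image Prod.fst) ≤ M.r (X.image Prod.fst ∩ Y.image Prod.fst) :=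
        M.r_mono (image_inter_subset _ _ _)
      have h3 := M.r_submod (X.image Prod.fst) (Y.image Prod.fst)
      simp only [hr', h1]
      omega
  set E' : Finset (α × ℕ) := M.E ×ˢ range q with hE'
  have hd : ∀ X ⊆ E', X.card ≤ p * r' X := by
    intro X hX
    set Z : Finset α := X.image Prod.fst with hZ
    have hZE : Z ⊆ M.E := by
      intro z hz
      obtain ⟨w, hw, rfl⟩ := mem_image.mp hz
      exact (mem_product.mp (hX hw)).1
    have hcard1 : X.card ≤ Z.card * q := by
      have hsub : X ⊆ Z ×ˢ range q := by
        intro w hw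
        refine mem_product.mpr ⟨mem_image_of_mem _ hw, (mem_product.mp (hX hw)).2⟩
      calc X.card ≤ (Z ×ˢ range q).card := card_le_card hsub
        _ = Z.card * q := by rw [card_product, card_range]
    rcases Z.eq_empty_or_nonempty with hZe | hZne
    · have : X = ∅ := image_eq_empty.mp hZe
      simp [this]
    · have hub : (Z.card : ℝ) / (M.r Z : ℝ) ≤ γ := hγ.2 ⟨Z, hZE, hZne, rfl⟩
      have hrZ1 : 1 ≤ M.r Z := by
        obtain ⟨z, hz⟩ := hZne
        have h1 : M.r {z} ≤ M.r Z := M.r_mono (by simpa using hz)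
        rw [hloop z (hZE hz)] at h1
        exact h1
      have hkey : Z.card * q ≤ p * M.r Z := by
        have hrZpos : (0 : ℝ) < (M.r Z : ℝ) := by exact_mod_cast hrZ1
        have hqpos : (0 : ℝ) < (q : ℝ) := by exact_mod_cast hq1
        rw [hγeq] at hub
        rw [div_le_div_iff₀ hrZpos hqpos] at hub
        exact_mod_cast hub
      calc X.card ≤ Z.card * q := hcard1
        _ ≤ p * M.r Z := hkey
        _ = p * r' X := rfl
  obtain ⟨J, hJ, hdisj, hunion⟩ := matroid_covering hr'rank E' p hd
  refine ⟨p, fun t => (J t).image Prod.fst, fun _ => 1 / (p : ℝ), ?_, ?_, ?_, ?_⟩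
  · intro t
    show (J t).image Prod.fst ⊆ M.E ∧ M.r ((J t).image Prod.fst) = ((J t).image Prod.fst).card
    have hJr : M.r ((J t).image Prod.fst) = (J t).card := (hJ t).2
    have h1 : ((J t).image Prod.fst).card ≤ (J t).card := card_image_le
    have h2 : M.r ((J t).image Prod.fst) ≤ ((J t).image Prod.fst).card := M.r_le_card _
    refine ⟨?_, by omega⟩
    intro z hz
    obtain ⟨w, hw, rfl⟩ := mem_image.mp hz
    exact (mem_product.mp ((hJ t).1 hw)).1
  · intro t
    positivity
  · rw [Finset.sum_const, card_univ, Fintype.card_fin, nsmul_eq_mul]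
    field_simp
  · intro e he
    -- injectivity of fst on each J t
    have hcardJ : ∀ t, ((J t).image Prod.fst).card = (J t).card := by
      intro t
      have hJr : M.r ((J t).image Prod.fst) = (J t).card := (hJ t).2
      have h1 : ((J t).image Prod.fst).card ≤ (J t).card := card_image_le
      have h2 : M.r ((J t).image Prod.fst) ≤ ((J t).image Prod.fst).card := M.r_le_card _
      omega
    have hinj : ∀ t, Set.InjOn Prod.fst (↑(J t) : Set (α × ℕ)) := fun t =>
      Finset.card_image_iff.mp (hcardJ t)
    set T : Finset (α × ℕ) := ({e} : Finset α) ×ˢ range q with hT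
    have hTE : T ⊆ E' := by
      intro z hz
      obtain ⟨hz1, hz2⟩ := mem_product.mp hz
      exact mem_product.mpr ⟨by simp at hz1; simp [hz1, he], hz2⟩
    have hbi : Finset.univ.biUnion (fun t => J t ∩ T) = T := by
      ext z
      simp only [mem_biUnion, mem_univ, true_and, mem_inter]
      constructor
      · rintro ⟨t, _, hz⟩; exact hz
      · intro hz
        have hz' : z ∈ Finset.univ.biUnion J := hunion.symm ▸ hTE hz
        obtain ⟨t, _, ht⟩ := mem_biUnion.mp hz'
        exact ⟨t, ht, hz⟩
    have hsum : ∑ t : Fin p, ((J t) ∩ T).card = q := by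
      rw [← card_biUnion, hbi, hT, card_product, card_singleton, card_range, one_mul]
      intro i _ j _ hij
      exact (hdisj i j hij).mono inter_subset_left inter_subset_left
    have hterm : ∀ t : Fin p, ((J t) ∩ T).card
        = if e ∈ (J t).image Prod.fst then 1 else 0 := by
      intro t
      split_ifs with h
      · obtain ⟨w, hw, hwe⟩ := mem_image.mp h
        have hwq : w.2 ∈ range q := (mem_product.mp ((hJ t).1 hw)).2
        have hwT : w ∈ T := mem_product.mpr ⟨by simp [hwe], hwq⟩
        rw [card_eq_one]
        refine ⟨w, ?_⟩
        ext z
        simp only [mem_inter, mem_singleton]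
        constructor
        · rintro ⟨hz1, hz2⟩
          have hze : z.1 = e := by
            have := (mem_product.mp hz2).1; simpa using this
          exact hinj t hz1 hw (hze.trans hwe.symm)
        · rintro rfl; exact ⟨hw, hwT⟩
      · rw [card_eq_zero]
        rw [eq_empty_iff_forall_notMem]
        rintro z hz
        obtain ⟨hz1, hz2⟩ := mem_inter.mp hz
        have hze : z.1 = e := by
          have := (mem_product.mp hz2).1; simpa using this
        exact h (mem_image.mpr ⟨z, hz1, hze⟩)
    have hcount : (Finset.univ.filter (fun t : Fin p => e ∈ (J t).image Prod.fst)).card = q := by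
      rw [card_filter]
      rw [← hsum]
      exact Finset.sum_congr rfl (fun t _ => (hterm t).symm)
    rw [Finset.sum_const, hcount, nsmul_eq_mul]
    rw [hγeq]
    have hppos : (0 : ℝ) < (p : ℝ) := by exact_mod_cast hp1
    have hqpos : (0 : ℝ) < (q : ℝ) := by exact_mod_cast hq1
    rw [one_div_div]
    rw [mul_one_div]
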